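/- For all integers n ≥ 2, the Pell numbers satisfy P_{2n+2} = 2 · Σ_{j=0}^{⌊n/2⌋} C(n−j, j) · (−1)^j · 6^{n−2j}, where C(m,k) denotes the binomial coefficient. -/

import Mathlib

open Finset

private def Taux (n : ℕ) : ℤ :=
  ∑ j ∈ range (n + 1), ((n - j).choose j : ℤ) * (-1 : ℤ) ^ j * 6 ^ (n - 2 * j)

private lemma pas (n j : ℕ) :
    (n + 1 - j).choose (j + 1) = (n - j).choose j + (n - j).choose (j + 1) := by
  rcases le_or_gt j n with h | h
  · have e : n + 1 - j = (n - j) + 1 := by omega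
    rw [e, Nat.choose_succ_succ]
  · have e1 : n + 1 - j = 0 := by omega
    have e2 : n - j = 0 := by omega
    rw [e1, e2]
    simp [Nat.choose_eq_zero_of_lt (show 0 < j + 1 by omega),
      Nat.choose_eq_zero_of_lt (show 0 < j by omega)]

private lemma Taux_rec (n : ℕ) : Taux (n + 2) = 6 * Taux (n + 1) - Taux n := by
  have step1 : Taux (n + 2)
      = (∑ j ∈ range (n + 2),
          (-(((n - j).choose j : ℤ) * (-1 : ℤ) ^ j * 6 ^ (n - 2 * j))
            + ((n - j).choose (j+1) : ℤ) * (-1 : ℤ) ^ (j+1) * 6 ^ (n - 2 * j)))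
        + 6 ^ (n + 2) := by
    rw [Taux, Finset.sum_range_succ']
    congr 1
    · refine Finset.sum_congr rfl fun j hj => ?_
      have e1 : n + 2 - (j+1) = n + 1 - j := by omega
      have e2 : n + 2 - 2 * (j+1) = n - 2 * j := by omega
      rw [e1, e2, pas]
      push_cast
      ring
    · norm_num
  have stepA : (∑ j ∈ range (n + 2),
      (-(((n - j).choose j : ℤ) * (-1 : ℤ) ^ j * 6 ^ (n - 2 * j)))) = -Taux n := by
    rw [Finset.sum_range_succ]
    have e1 : n - (n + 1) = 0 := by omega
    rw [e1, Nat.choose_eq_zero_of_lt (by omega), Taux, ← Finset.sum_neg_distrib]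
    push_cast
    ring
  have stepB : (∑ j ∈ range (n + 2),
      ((n - j).choose (j+1) : ℤ) * (-1 : ℤ) ^ (j+1) * 6 ^ (n - 2 * j))
      = 6 * Taux (n + 1) - 6 ^ (n + 2) := by
    have hg : (∑ k ∈ range (n + 3),
        ((n + 1 - k).choose k : ℤ) * (-1 : ℤ) ^ k * 6 ^ (n + 2 - 2 * k))
        = (∑ j ∈ range (n + 2),
          ((n - j).choose (j+1) : ℤ) * (-1 : ℤ) ^ (j+1) * 6 ^ (n - 2 * j)) + 6 ^ (n + 2) := by
      rw [Finset.sum_range_succ']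
      congr 1
      · refine Finset.sum_congr rfl fun j hj => ?_
        have e1 : n + 1 - (j+1) = n - j := by omega
        have e2 : n + 2 - 2 * (j+1) = n - 2 * j := by omega
        rw [e1, e2]
      · norm_num
    have hg2 : (∑ k ∈ range (n + 3),
        ((n + 1 - k).choose k : ℤ) * (-1 : ℤ) ^ k * 6 ^ (n + 2 - 2 * k))
        = 6 * Taux (n + 1) := by
      rw [Taux, Finset.mul_sum, Finset.sum_range_succ]
      have e1 : n + 1 - (n + 2) = 0 := by omega
      rw [e1, Nat.choose_eq_zero_of_lt (by omega)]
      norm_num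
      refine Finset.sum_congr rfl fun k hk => ?_
      rcases le_or_gt (2 * k) (n + 1) with h | h
      · have e2 : n + 2 - 2 * k = (n + 1 - 2 * k) + 1 := by omega
        rw [e2, pow_succ]
        ring
      · have hlt : n + 1 - k < k := by omega
        rw [Nat.choose_eq_zero_of_lt hlt]
        norm_num
    linarith [hg, hg2]
  rw [step1, Finset.sum_add_distrib, stepA, stepB]
  ring

theorem pell_binomial_even (P : ℕ → ℤ)
    (hP0 : P 0 = 0) (hP1 : P 1 = 1)
    (hP : ∀ n : ℕ, P (n + 2) = 2 * P (n + 1) + P n)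
    (n : ℕ) (hn : 2 ≤ n) :
    P (2 * n + 2) = 2 * ∑ j ∈ Finset.range (n / 2 + 1),
      ((n - j).choose j : ℤ) * (-1 : ℤ) ^ j * 6 ^ (n - 2 * j) := by
  have step : ∀ k : ℕ, P (k + 4) = 6 * P (k + 2) - P k := by
    intro k
    have h1 := hP k
    have h2 := hP (k + 1)
    have h3 := hP (k + 2)
    simp only [show k + 1 + 2 = k + 3 from by omega, show k + 1 + 1 = k + 2 from by omega,
      show k + 2 + 2 = k + 4 from by omega, show k + 2 + 1 = k + 3 from by omega] at h1 h2 h3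
    linarith
  have key : ∀ m : ℕ, P (2 * m + 2) = 2 * Taux m := by
    intro m
    induction m using Nat.twoStepInduction with
    | zero =>
      have h0 := hP 0
      norm_num [hP0, hP1] at h0
      simp [Taux, h0]
    | one =>
      have h0 := hP 0
      have h1 := hP 1
      have h2 := hP 2
      norm_num [hP0, hP1] at h0 h1 h2
      simp [Taux, Finset.sum_range_succ]
      omega
    | more m ih1 ih2 =>
      have e : 2 * (m + 2) + 2 = (2 * m + 2) + 4 := by ring
      rw [e, step, Taux_rec]
      have e2 : (2 * m + 2) + 2 = 2 * (m + 1) + 2 := by ring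
      rw [e2, ih2, ih1]
      ring
  rw [key n]
  congr 1
  rw [Taux]
  symm
  apply Finset.sum_subset
  · exact Finset.range_subset_range.mpr (by omega)
  · intro j hj hj2
    simp only [Finset.mem_range] at hj hj2
    have hlt : n - j < j := by omega
    rw [Nat.choose_eq_zero_of_lt hlt]
    norm_num
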